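/- Let G be a cactus graph with |G| ≥ 5. Then the complement Ḡ has an orthogonal representation by pairwise linearly independent vectors in ℝ^5. -/

import Mathlib

open Matrix Finset

local notation "E5" => EuclideanSpace ℝ (Fin 5)

/-- A finite-dimensional space over an infinite field is not a finite union of
subspaces none of which contains `K`. -/
lemma exists_avoidance {V : Type*} [AddCommGroup V] [Module ℝ V]
    (K : Submodule ℝ V) (F : Finset (Submodule ℝ V)) (hF : ∀ p ∈ F, ¬ K ≤ p) :
    ∃ x ∈ K, ∀ p ∈ F, x ∉ p := by
  classical
  induction F using Finset.induction_on with
  | empty => exact ⟨0, K.zero_mem, by simp⟩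
  | @insert p F hpF ih =>
    obtain ⟨x, hxK, hx⟩ := ih (fun q hq => hF q (Finset.mem_insert_of_mem hq))
    obtain ⟨y, hyK, hyp⟩ := SetLike.not_le_iff_exists.mp (hF p (Finset.mem_insert_self _ _))
    have key : ∀ q ∈ insert p F, Set.Subsingleton {c : ℝ | x + c • y ∈ q} := by
      intro q hq c₁ h₁ c₂ h₂
      by_contra hne
      have hcc : c₁ - c₂ ≠ 0 := sub_ne_zero.mpr hne
      have h3 : (c₁ - c₂) • y ∈ q := by
        have := q.sub_mem h₁ h₂
        simpa [sub_smul, add_sub_add_comm] using this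
      have hyq : y ∈ q := by
        have := q.smul_mem (c₁ - c₂)⁻¹ h3
        rwa [smul_smul, inv_mul_cancel₀ hcc, one_smul] at this
      have hxq : x ∈ q := by
        have := q.sub_mem h₁ (q.smul_mem c₁ hyq)
        simpa using this
      rcases Finset.mem_insert.mp hq with rfl | hq'
      · exact hyp hyq
      · exact hx q hq' hxq
    have hbad : ({c : ℝ | ∃ q ∈ insert p F, x + c • y ∈ q}).Finite := by
      have : {c : ℝ | ∃ q ∈ insert p F, x + c • y ∈ q}
          = ⋃ q ∈ (insert p F : Finset _), {c : ℝ | x + c • y ∈ q} := by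
        ext c; simp
      rw [this]
      exact Set.Finite.biUnion (Finset.finite_toSet _)
        (fun q hq => Set.Subsingleton.finite (key q hq))
    obtain ⟨c, hc⟩ := hbad.infinite_compl.nonempty
    refine ⟨x + c • y, K.add_mem hxK (K.smul_mem c hyK), ?_⟩
    intro q hq hmem
    exact hc ⟨q, hq, hmem⟩

/-- In a path starting at `v`, there is at most one edge incident to `v`. -/
lemma start_edge_unique {V : Type*} {G : SimpleGraph V} {v w : V} (p : G.Walk v w)
    (hp : p.IsPath) {x y : V} (h1 : s(v, x) ∈ p.edges) (h2 : s(v, y) ∈ p.edges) :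
    x = y := by
  cases p with
  | nil => simp at h1
  | @cons _ c _ h r =>
    rw [SimpleGraph.Walk.cons_isPath_iff] at hp
    have key : ∀ z : V, s(v, z) ∈ (SimpleGraph.Walk.cons h r).edges → z = c := by
      intro z hz
      rw [SimpleGraph.Walk.edges_cons, List.mem_cons] at hz
      rcases hz with hz | hz
      · rw [Sym2.eq_iff] at hz
        rcases hz with ⟨-, rfl⟩ | ⟨rfl, rfl⟩
        · rfl
        · exact absurd h (G.irrefl)
      · exact absurd (SimpleGraph.Walk.fst_mem_support_of_mem_edges r hz) hp.2
    rw [key x h1, key y h2]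

/-- Every nonempty vertex subset of a graph in which any two cycles sharing an
edge coincide contains a vertex with at most 2 neighbours in the subset. -/
lemma exists_lowdeg {n : ℕ} {G : SimpleGraph (Fin n)} [DecidableRel G.Adj]
    (hc : ∀ (u w : Fin n) (p : G.Walk u u) (q : G.Walk w w), p.IsCycle → q.IsCycle →
      ∀ e ∈ p.edges, e ∈ q.edges → ∀ e', (e' ∈ p.edges ↔ e' ∈ q.edges))
    (s : Finset (Fin n)) (hs : s.Nonempty) :
    ∃ v ∈ s, ((s.erase v).filter (G.Adj v)).card ≤ 2 := by
  classical
  by_contra hcon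
  push_neg at hcon
  -- the set of lengths of paths with support inside `s`
  set L : Set ℕ := {k | ∃ (a b : Fin n) (p : G.Walk a b), p.IsPath ∧
      (∀ x ∈ p.support, x ∈ s) ∧ p.length = k} with hL
  obtain ⟨v₀, hv₀⟩ := hs
  have hLne : L.Nonempty := ⟨0, v₀, v₀, SimpleGraph.Walk.nil, by simp [hv₀]⟩
  have hLbdd : BddAbove L := by
    refine ⟨n, ?_⟩
    rintro k ⟨a, b, p, hp, -, rfl⟩
    have := hp.length_lt
    simpa using this.le.trans (by simp)
  obtain ⟨a0, b0, p0, hp0, hsupp0, hlen0⟩ := Nat.sSup_mem hLne hLbdd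
  -- a maximal path, written so that we try to extend at its start `b`
  obtain ⟨b, a, p, hp, hsupp, hplen⟩ :
      ∃ (b a : Fin n) (p : G.Walk b a), p.IsPath ∧
        (∀ x ∈ p.support, x ∈ s) ∧ p.length = sSup L := by
    refine ⟨b0, a0, p0.reverse, hp0.reverse, ?_, by simpa using hlen0⟩
    intro x hx
    exact hsupp0 x (by simpa [SimpleGraph.Walk.support_reverse] using hx)
  -- every neighbour of `b` inside `s` is on `p`
  have hnbr : ∀ w, G.Adj b w → w ∈ s → w ∈ p.support := by
    intro w hadj hws
    by_contra hwsup
    have hq : (SimpleGraph.Walk.cons hadj.symm p).IsPath :=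
      (SimpleGraph.Walk.cons_isPath_iff _ _).mpr ⟨hp, hwsup⟩
    have hmem : p.length + 1 ∈ L := by
      refine ⟨w, a, SimpleGraph.Walk.cons hadj.symm p, hq, ?_, by simp⟩
      intro x hx
      rcases (by simpa using hx : x = w ∨ x ∈ p.support) with rfl | hx
      · exact hws
      · exact hsupp x hx
    have := le_csSup hLbdd hmem
    omega
  have hbs : b ∈ s := hsupp b p.start_mem_support
  set N : Finset (Fin n) := (s.erase b).filter (G.Adj b) with hNdef
  have hN : 2 < N.card := hcon b hbs
  have hNprop : ∀ w ∈ N, G.Adj b w ∧ w ∈ s ∧ w ≠ b ∧ w ∈ p.support := by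
    intro w hw
    rw [hNdef, Finset.mem_filter, Finset.mem_erase] at hw
    exact ⟨hw.2, hw.1.2, hw.1.1, hnbr w hw.2 hw.1.2⟩
  -- `p` is not nil; name its second vertex `c`.
  have hpnil : ¬ p.Nil := by
    intro hnil
    rw [SimpleGraph.Walk.nil_iff_support_eq] at hnil
    obtain ⟨w, hw⟩ : N.Nonempty := Finset.card_pos.mp (by omega)
    obtain ⟨-, -, hwb, hwsup⟩ := hNprop w hw
    rw [hnil] at hwsup
    simp at hwsup
    exact hwb hwsup
  obtain ⟨c, hbc, r, rfl⟩ := SimpleGraph.Walk.not_nil_iff.mp hpnil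
  -- choose two neighbours different from `c`
  have hcard : 2 ≤ (N.erase c).card := by
    have := Finset.pred_card_le_card_erase (s := N) (a := c)
    omega
  obtain ⟨w₁, hw₁, w₂, hw₂, hw12⟩ := Finset.one_lt_card.mp (by omega : 1 < (N.erase c).card)
  -- facts about w₁ w₂
  have hfacts : ∀ w ∈ N.erase c, G.Adj b w ∧ w ≠ b ∧ w ≠ c ∧
      w ∈ (SimpleGraph.Walk.cons hbc r).support := by
    intro w hw
    obtain ⟨hwc, hwN⟩ := Finset.mem_erase.mp hw
    obtain ⟨h1, h2, h3, h4⟩ := hNprop w hwN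
    exact ⟨h1, h3, hwc, h4⟩
  obtain ⟨hadj₁, hw₁b, hw₁c, hw₁sup⟩ := hfacts w₁ hw₁
  obtain ⟨hadj₂, hw₂b, hw₂c, hw₂sup⟩ := hfacts w₂ hw₂
  set P : G.Walk b a := SimpleGraph.Walk.cons hbc r with hPdef
  -- any edge of P incident to b joins it to c
  have hstart : ∀ x : Fin n, s(b, x) ∈ P.edges → x = c := by
    intro x hx
    exact start_edge_unique P hp hx (by simp [hPdef])
  -- the two cycles
  have build : ∀ w ∈ N.erase c, ∃ (cyc : G.Walk b b) (q : G.Walk b w), cyc.IsCycle ∧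
      (∀ e ∈ q.edges, e ∈ P.edges) ∧
      cyc.edges = s(b, w) :: q.reverse.edges ∧
      s(b, c) ∈ cyc.edges := by
    intro w hw
    obtain ⟨hadj, hwb, hwc, hwsup⟩ := hfacts w hw
    set q : G.Walk b w := P.takeUntil w hwsup with hqdef
    have hqpath : q.IsPath := hp.takeUntil hwsup
    have hqedges : ∀ e ∈ q.edges, e ∈ P.edges := fun e he =>
      SimpleGraph.Walk.edges_takeUntil_subset P hwsup he
    -- q is not nil
    have hqnil : ¬ q.Nil := SimpleGraph.Walk.not_nil_of_ne (fun hbw => hwb hbw.symm)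
    obtain ⟨d, hbd, rq, hq⟩ := SimpleGraph.Walk.not_nil_iff.mp hqnil
    have hfirst : s(b, d) ∈ q.edges := by rw [hq]; simp
    have hdc : d = c := hstart d (hqedges _ hfirst)
    have hbcq : s(b, c) ∈ q.edges := by rw [← hdc]; exact hfirst
    refine ⟨SimpleGraph.Walk.cons hadj q.reverse, q, ?_, hqedges, ?_, ?_⟩
    · rw [SimpleGraph.Walk.cons_isCycle_iff]
      refine ⟨hqpath.reverse, ?_⟩
      intro hmem
      rw [SimpleGraph.Walk.edges_reverse] at hmem
      exact hwc (hstart w (hqedges _ (List.mem_reverse.mp hmem)))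
    · simp
    · rw [SimpleGraph.Walk.edges_cons]
      right
      rw [SimpleGraph.Walk.edges_reverse]
      exact List.mem_reverse.mpr hbcq
  obtain ⟨cyc₁, q₁, hcyc₁, hq₁P, hedges₁, hbc₁⟩ := build w₁ hw₁
  obtain ⟨cyc₂, q₂, hcyc₂, hq₂P, hedges₂, hbc₂⟩ := build w₂ hw₂
  -- apply the cactus hypothesis with common edge s(b,c)
  have hiff := hc b b cyc₁ cyc₂ hcyc₁ hcyc₂ s(b, c) hbc₁ hbc₂ s(b, w₂)
  have hmem₂ : s(b, w₂) ∈ cyc₂.edges := by rw [hedges₂]; simp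
  have hmem₁ : s(b, w₂) ∈ cyc₁.edges := hiff.mpr hmem₂
  rw [hedges₁, List.mem_cons] at hmem₁
  rcases hmem₁ with heq | hmem₁
  · rw [Sym2.eq_iff] at heq
    rcases heq with ⟨-, h⟩ | ⟨h1, h2⟩
    · exact hw12 h.symm
    · exact hw₁b h1.symm
  · rw [SimpleGraph.Walk.edges_reverse] at hmem₁
    exact hw₂c (hstart w₂ (hq₁P _ (List.mem_reverse.mp hmem₁)))

lemma main_construction {n : ℕ} (G : SimpleGraph (Fin n)) [DecidableRel G.Adj]
    [DecidableEq E5]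
    (hc : ∀ (u w : Fin n) (p : G.Walk u u) (q : G.Walk w w), p.IsCycle → q.IsCycle →
      ∀ e ∈ p.edges, e ∈ q.edges → ∀ e', (e' ∈ p.edges ↔ e' ∈ q.edges))
    (k : ℕ) :
    ∀ s : Finset (Fin n), s.card ≤ k →
    ∃ f : Fin n → E5,
      (∀ u ∈ s, ∀ w ∈ s, u ≠ w → (inner ℝ (f u) (f w) ≠ (0:ℝ) ↔ ¬ G.Adj u w)) ∧
      (∀ u ∈ s, ∀ T : Finset (Fin n), T ⊆ s.erase u → T.card ≤ 2 →
        f u ∉ Submodule.span ℝ ((T.image f : Finset E5) : Set E5)) := by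
  classical
  induction k with
  | zero =>
    intro s hs
    rw [Nat.le_zero, Finset.card_eq_zero] at hs
    subst hs
    exact ⟨fun _ => 0, by simp, by simp⟩
  | succ k ih =>
    intro s hs
    rcases s.eq_empty_or_nonempty with rfl | hne
    · exact ⟨fun _ => 0, by simp, by simp⟩
    obtain ⟨v, hv, hvdeg⟩ := exists_lowdeg hc s hne
    set t : Finset (Fin n) := s.erase v with htdef
    have hvt : v ∉ t := Finset.notMem_erase _ _
    have hts : insert v t = s := Finset.insert_erase hv
    have htcard : t.card ≤ k := by
      have h1 : t.card = s.card - 1 := by rw [htdef]; exact Finset.card_erase_of_mem hv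
      have h2 : 1 ≤ s.card := Finset.card_pos.mpr hne
      omega
    obtain ⟨f, hf1, hf2⟩ := ih t htcard
    set S : Finset (Fin n) := t.filter (G.Adj v) with hSdef
    have hScard : S.card ≤ 2 := hvdeg
    have hSt : S ⊆ t := Finset.filter_subset _ _
    -- the constraint space
    set K : Submodule ℝ E5 := (Submodule.span ℝ ((S.image f : Finset E5) : Set E5))ᗮ
      with hKdef
    have hrankS : Module.finrank ℝ (Submodule.span ℝ ((S.image f : Finset E5) : Set E5)) ≤ 2 :=
      le_trans (finrank_span_finset_le_card _) (le_trans (Finset.card_image_le) hScard)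
    have hrankK : 3 ≤ Module.finrank ℝ K := by
      have h5 : Module.finrank ℝ E5 = 5 := by simp [finrank_euclideanSpace]
      have h6 := Submodule.finrank_add_finrank_orthogonal
        (K := Submodule.span ℝ ((S.image f : Finset E5) : Set E5))
      rw [h5, ← hKdef] at h6
      omega
    -- the collection of bad subspaces
    set F₁ : Finset (Submodule ℝ E5) := (t \ S).image (fun u => (ℝ ∙ f u)ᗮ) with hF₁def
    set F₂ : Finset (Submodule ℝ E5) :=
      (t.powerset.filter (fun T => T.card ≤ 2)).image
        (fun T => Submodule.span ℝ ((T.image f : Finset E5) : Set E5)) with hF₂def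
    have hproper : ∀ p ∈ F₁ ∪ F₂, ¬ K ≤ p := by
      intro p hp
      rcases Finset.mem_union.mp hp with hp | hp
      · obtain ⟨u, hu, rfl⟩ := Finset.mem_image.mp hp
        obtain ⟨hut, huS⟩ := Finset.mem_sdiff.mp hu
        intro hle
        have h1 : ((ℝ ∙ f u)ᗮ)ᗮ ≤ Kᗮ := Submodule.orthogonal_le hle
        rw [Submodule.orthogonal_orthogonal, hKdef, Submodule.orthogonal_orthogonal] at h1
        have h2 : f u ∈ Submodule.span ℝ ((S.image f : Finset E5) : Set E5) :=
          h1 (Submodule.mem_span_singleton_self _)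
        refine hf2 u hut S ?_ hScard h2
        exact Finset.subset_erase.mpr ⟨hSt, huS⟩
      · obtain ⟨T, hT, rfl⟩ := Finset.mem_image.mp hp
        obtain ⟨hTt, hTcard⟩ := Finset.mem_filter.mp hT
        intro hle
        have h1 : Module.finrank ℝ K ≤
            Module.finrank ℝ (Submodule.span ℝ ((T.image f : Finset E5) : Set E5)) :=
          Submodule.finrank_mono (R := ℝ) (M := E5) hle
        have h2 : Module.finrank ℝ (Submodule.span ℝ ((T.image f : Finset E5) : Set E5)) ≤ 2 :=
          le_trans (finrank_span_finset_le_card _)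
            (le_trans Finset.card_image_le hTcard)
        omega
    obtain ⟨x, hxK, hx⟩ := exists_avoidance K (F₁ ∪ F₂) hproper
    have hxF₁ : ∀ u ∈ t, ¬ G.Adj v u → x ∉ (ℝ ∙ f u)ᗮ := by
      intro u hu hadj
      refine hx _ (Finset.mem_union_left _ (Finset.mem_image_of_mem _ ?_))
      exact Finset.mem_sdiff.mpr ⟨hu, fun hmem => hadj (Finset.mem_filter.mp hmem).2⟩
    have hxF₂ : ∀ T : Finset (Fin n), T ⊆ t → T.card ≤ 2 →
        x ∉ Submodule.span ℝ ((T.image f : Finset E5) : Set E5) := by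
      intro T hTt hTc
      refine hx _ (Finset.mem_union_right _ (Finset.mem_image_of_mem _ ?_))
      exact Finset.mem_filter.mpr ⟨Finset.mem_powerset.mpr hTt, hTc⟩
    -- inner products of x with old vectors
    have hxadj : ∀ u ∈ t, G.Adj v u → inner ℝ (f u) x = (0:ℝ) := by
      intro u hu hadj
      have hmem : f u ∈ Submodule.span ℝ ((S.image f : Finset E5) : Set E5) := by
        apply Submodule.subset_span
        exact_mod_cast Finset.mem_image_of_mem f (Finset.mem_filter.mpr ⟨hu, hadj⟩)
      exact (Submodule.mem_orthogonal _ _).mp hxK _ hmem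
    have hxnadj : ∀ u ∈ t, ¬ G.Adj v u → inner ℝ x (f u) ≠ (0:ℝ) := by
      intro u hu hadj hzero
      exact hxF₁ u hu hadj (Submodule.mem_orthogonal_singleton_iff_inner_left.mpr hzero)
    -- the new family
    set f' : Fin n → E5 := Function.update f v x with hf'def
    have hf'v : f' v = x := Function.update_self _ _ _
    have hf't : ∀ u ∈ t, f' u = f u := by
      intro u hu
      have huv : u ≠ v := by rintro rfl; exact hvt hu
      exact Function.update_of_ne huv _ _
    have himage : ∀ T : Finset (Fin n), T ⊆ t → T.image f' = T.image f := by
      intro T hTt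
      apply Finset.image_congr
      intro u hu
      exact hf't u (hTt hu)
    refine ⟨f', ?_, ?_⟩
    · -- inner product condition
      intro u hu w hw huw
      rw [← hts, Finset.mem_insert] at hu hw
      rcases hu with rfl | hu <;> rcases hw with rfl | hw
      · exact absurd rfl huw
      · -- u = v, w ∈ t
        rw [hf'v, hf't w hw]
        by_cases hadj : G.Adj u w
        · have h0 : inner ℝ x (f w) = (0:ℝ) := by
            rw [real_inner_comm]; exact hxadj w hw hadj
          exact iff_of_false (not_not_intro h0) (not_not_intro hadj)
        · exact iff_of_true (hxnadj w hw hadj) hadj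
      · -- u ∈ t, w = v
        rw [hf'v, hf't u hu]
        by_cases hadj : G.Adj u w
        · exact iff_of_false (not_not_intro (hxadj u hu hadj.symm)) (not_not_intro hadj)
        · have h0 : inner ℝ (f u) x ≠ (0:ℝ) := by
            rw [real_inner_comm]
            exact hxnadj u hu (fun h => hadj h.symm)
          exact iff_of_true h0 hadj
      · rw [hf't u hu, hf't w hw]
        exact hf1 u hu w hw huw
    · -- span condition
      intro u hu T hTsub hTcard
      rw [← hts, Finset.mem_insert] at hu
      rcases hu with rfl | hu
      · -- u = v
        have hTt : T ⊆ t := by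
          intro y hy
          have := hTsub hy
          rw [← hts] at this
          have h1 := Finset.mem_of_mem_erase this
          have h2 := Finset.ne_of_mem_erase this
          rcases Finset.mem_insert.mp h1 with rfl | h1
          · exact absurd rfl h2
          · exact h1
        rw [hf'v, himage T hTt]
        exact hxF₂ T hTt hTcard
      · -- u ∈ t
        rw [hf't u hu]
        by_cases hvT : v ∈ T
        · -- v ∈ T : use exchange
          set T' : Finset (Fin n) := T.erase v with hT'def
          have hT't : T' ⊆ t.erase u := by
            intro y hy
            obtain ⟨hyv, hyT⟩ := Finset.mem_erase.mp hy
            have h1 := hTsub hyT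
            obtain ⟨hyu, hys⟩ := Finset.mem_erase.mp h1
            exact Finset.mem_erase.mpr ⟨hyu, Finset.mem_erase.mpr ⟨hyv, hys⟩⟩
          have hT'card : T'.card ≤ 1 := by
            have h1 : T'.card = T.card - 1 := by rw [hT'def]; exact Finset.card_erase_of_mem hvT
            omega
          have hold : f u ∉ Submodule.span ℝ ((T'.image f : Finset E5) : Set E5) :=
            hf2 u hu T' hT't (by omega)
          intro hmem
          -- rewrite T.image f' as insert x (T'.image f)
          have hTsplit : T.image f' = insert x (T'.image f) := by
            have : T = insert v T' := (Finset.insert_erase hvT).symm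
            rw [this, Finset.image_insert, hf'v,
              himage T' (hT't.trans (Finset.erase_subset _ _))]
          rw [hTsplit] at hmem
          have hmem' : f u ∈ Submodule.span ℝ
              (insert x ((T'.image f : Finset E5) : Set E5)) := by
            rwa [Finset.coe_insert] at hmem
          have hexch : x ∈ Submodule.span ℝ
              (insert (f u) ((T'.image f : Finset E5) : Set E5)) :=
            mem_span_insert_exchange hmem' hold
          have hins : (insert (f u) ((T'.image f : Finset E5) : Set E5))
              = (((insert u T').image f : Finset E5) : Set E5) := by
            rw [Finset.image_insert, Finset.coe_insert]
          rw [hins] at hexch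
          refine hxF₂ (insert u T') ?_ ?_ hexch
          · intro y hy
            rcases Finset.mem_insert.mp hy with rfl | hy
            · exact hu
            · exact (Finset.erase_subset _ _) (hT't hy)
          · have := Finset.card_insert_le u T'
            omega
        · -- v ∉ T
          have hTt : T ⊆ t.erase u := by
            intro y hy
            have h1 := hTsub hy
            obtain ⟨hyu, hys⟩ := Finset.mem_erase.mp h1
            refine Finset.mem_erase.mpr ⟨hyu, ?_⟩
            rw [htdef]
            exact Finset.mem_erase.mpr ⟨fun h => hvT (h ▸ hy), hys⟩
          rw [himage T (hTt.trans (Finset.erase_subset _ _))]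
          exact hf2 u hu T hTt hTcard

/-- A cactus graph: a simple connected graph in which every edge belongs to at
most one cycle, i.e. any two cycles sharing a common edge have the same edge set. -/
def IsCactus {n : ℕ} (G : SimpleGraph (Fin n)) : Prop :=
  G.Connected ∧
    ∀ (u w : Fin n) (p : G.Walk u u) (q : G.Walk w w), p.IsCycle → q.IsCycle →
      ∀ e ∈ p.edges, e ∈ q.edges → ∀ e', (e' ∈ p.edges ↔ e' ∈ q.edges)

/-- If `G` is a cactus graph with `|G| ≥ 5`, then the complement `Ḡ` has an
orthogonal representation by pairwise linearly independent vectors in `ℝ⁵`. -/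
theorem cactus_complement_has_orthogonal_representation {n : ℕ} (hn : 5 ≤ n)
    (G : SimpleGraph (Fin n)) (hG : IsCactus G) :
    ∃ f : Fin n → (Fin 5 → ℝ),
      (∀ u w : Fin n, u ≠ w → (f u ⬝ᵥ f w ≠ 0 ↔ Gᶜ.Adj u w)) ∧
      (∀ u w : Fin n, u ≠ w → LinearIndependent ℝ ![f u, f w]) := by
  classical
  obtain ⟨-, hc⟩ := hG
  obtain ⟨f, hf1, hf2⟩ := main_construction G hc n Finset.univ (by simp)
  set g : Fin n → (Fin 5 → ℝ) := fun i => f i with hgdef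
  have hdot : ∀ u w : Fin n, g u ⬝ᵥ g w = inner ℝ (f u) (f w) := by
    intro u w
    simp [hgdef, dotProduct, PiLp.inner_apply, RCLike.inner_apply, starRingEnd_apply, mul_comm]
  have hne : ∀ u : Fin n, f u ≠ 0 := by
    intro u hu0
    have := hf2 u (Finset.mem_univ u) ∅ (by simp) (by simp)
    rw [hu0] at this
    simp at this
  have hpair : ∀ u w : Fin n, u ≠ w → ∀ a : ℝ, a • f w ≠ f u := by
    intro u w huw a ha
    have hTsub : ({w} : Finset (Fin n)) ⊆ Finset.univ.erase u := by
      intro y hy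
      rw [Finset.mem_singleton] at hy
      subst hy
      exact Finset.mem_erase.mpr ⟨huw.symm, Finset.mem_univ _⟩
    refine hf2 u (Finset.mem_univ u) {w} hTsub (by simp) ?_
    rw [Finset.image_singleton, Finset.coe_singleton]
    exact Submodule.mem_span_singleton.mpr ⟨a, ha⟩
  refine ⟨g, ?_, ?_⟩
  · intro u w huw
    rw [hdot, hf1 u (Finset.mem_univ u) w (Finset.mem_univ w) huw, SimpleGraph.compl_adj]
    exact ⟨fun h => ⟨huw, h⟩, fun h => h.2⟩
  · intro u w huw
    refine linearIndependent_fin2.mpr ⟨?_, ?_⟩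
    · simpa [hgdef] using hne w
    · intro a ha
      exact hpair u w huw a ((WithLp.ofLp_injective 2) (by simpa [hgdef] using ha))
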